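/- A squarefree positive integer t is a congruent number if and only if t is the squarefree part of the area of some primitive Pythagorean triple, i.e., a triple of pairwise coprime positive integers (a,b,c) with a^2 + b^2 = c^2 and ab/2 = t·n^2 for some positive integer n. -/

import Mathlib

private lemma sq_mod_four (n : ℕ) : n ^ 2 % 4 = 0 ∨ n ^ 2 % 4 = 1 := by
  rcases Nat.even_or_odd n with ⟨k, hk⟩ | ⟨k, hk⟩ <;> subst hk <;> [left; right] <;>
    ring_nf <;> omega

private lemma odd_sq_mod_four (n : ℕ) (h : n % 2 = 1) : n ^ 2 % 4 = 1 := by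
  obtain ⟨k, hk⟩ : ∃ k, n = 2 * k + 1 := ⟨n / 2, by omega⟩
  subst hk; ring_nf; omega

private lemma key (t u k : ℕ) (ht : 0 < t) (htsf : Squarefree t) (h : u * t = k ^ 2) :
    ∃ m, u = t * m ^ 2 := by
  have htk : t ∣ k := by
    rw [← Squarefree.dvd_pow_iff_dvd htsf (two_ne_zero), ← h]
    exact ⟨u, mul_comm u t⟩
  obtain ⟨m, rfl⟩ := htk
  refine ⟨m, ?_⟩
  have h2 : u * t = (t * m ^ 2) * t := by rw [h]; ring
  exact Nat.eq_of_mul_eq_mul_right ht h2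

theorem congruent_iff_squarefree_part_of_primitive_area (t : ℕ) (ht : 0 < t)
    (htsf : Squarefree t) :
    (∃ a b c : ℚ, 0 < a ∧ 0 < b ∧ 0 < c ∧ a ^ 2 + b ^ 2 = c ^ 2 ∧ a * b / 2 = t) ↔
      ∃ a b c n : ℕ, 0 < a ∧ 0 < b ∧ 0 < c ∧ 0 < n ∧
        Nat.Coprime a b ∧ Nat.Coprime a c ∧ Nat.Coprime b c ∧
        a ^ 2 + b ^ 2 = c ^ 2 ∧ a * b = 2 * (t * n ^ 2) := by
  constructor
  · rintro ⟨a, b, c, ha, hb, hc, hpyth, harea⟩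
    have hna : (a.num : ℚ) = a * a.den := (div_eq_iff (by positivity)).mp (Rat.num_div_den a)
    have hnb : (b.num : ℚ) = b * b.den := (div_eq_iff (by positivity)).mp (Rat.num_div_den b)
    have hnc : (c.num : ℚ) = c * c.den := (div_eq_iff (by positivity)).mp (Rat.num_div_den c)
    have hta : ((a.num.toNat : ℕ) : ℚ) = a * a.den := by
      rw [← hna]
      exact_mod_cast congrArg (fun z : ℤ => (z : ℚ))
        (Int.toNat_of_nonneg (le_of_lt (Rat.num_pos.mpr ha)))
    have htb : ((b.num.toNat : ℕ) : ℚ) = b * b.den := by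
      rw [← hnb]
      exact_mod_cast congrArg (fun z : ℤ => (z : ℚ))
        (Int.toNat_of_nonneg (le_of_lt (Rat.num_pos.mpr hb)))
    have htc : ((c.num.toNat : ℕ) : ℚ) = c * c.den := by
      rw [← hnc]
      exact_mod_cast congrArg (fun z : ℤ => (z : ℚ))
        (Int.toNat_of_nonneg (le_of_lt (Rat.num_pos.mpr hc)))
    set d : ℕ := a.den * b.den * c.den with hd
    have hd0 : 0 < d := by positivity
    set A : ℕ := a.num.toNat * (b.den * c.den) with hA
    set B : ℕ := b.num.toNat * (a.den * c.den) with hB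
    set C : ℕ := c.num.toNat * (a.den * b.den) with hC
    have hAq : (A : ℚ) = a * d := by
      rw [hA, hd]
      push_cast
      rw [hta]; ring
    have hBq : (B : ℚ) = b * d := by
      rw [hB, hd]
      push_cast
      rw [htb]; ring
    have hCq : (C : ℚ) = c * d := by
      rw [hC, hd]
      push_cast
      rw [htc]; ring
    have hA0 : 0 < A := by
      have : (0:ℚ) < A := by rw [hAq]; positivity
      exact_mod_cast this
    have hB0 : 0 < B := by
      have : (0:ℚ) < B := by rw [hBq]; positivity
      exact_mod_cast this
    have hC0 : 0 < C := by
      have : (0:ℚ) < C := by rw [hCq]; positivity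
      exact_mod_cast this
    have hpy : A ^ 2 + B ^ 2 = C ^ 2 := by
      have : (A:ℚ) ^ 2 + (B:ℚ) ^ 2 = (C:ℚ) ^ 2 := by
        rw [hAq, hBq, hCq]; linear_combination (d:ℚ)^2 * hpyth
      exact_mod_cast this
    have hab : a * b = 2 * t := by
      have h2 : (2:ℚ) ≠ 0 := two_ne_zero
      field_simp at harea
      linarith [harea]
    have harea' : A * B = 2 * (t * d ^ 2) := by
      have : (A:ℚ) * B = 2 * (t * d ^ 2) := by
        rw [hAq, hBq]; linear_combination (d:ℚ)^2 * hab
      exact_mod_cast this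
    -- reduce to primitive
    set g : ℕ := Nat.gcd A B with hg
    have hg0 : 0 < g := Nat.gcd_pos_of_pos_left _ hA0
    obtain ⟨A', hA'⟩ : g ∣ A := Nat.gcd_dvd_left A B
    obtain ⟨B', hB'⟩ : g ∣ B := Nat.gcd_dvd_right A B
    have hgC : g ∣ C := by
      rw [← Nat.pow_dvd_pow_iff (two_ne_zero), ← hpy, hA', hB']
      exact ⟨A' ^ 2 + B' ^ 2, by ring⟩
    obtain ⟨C', hC'⟩ := hgC
    have hA'0 : 0 < A' := Nat.pos_of_ne_zero (fun h => by simp [hA', h] at hA0)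
    have hB'0 : 0 < B' := Nat.pos_of_ne_zero (fun h => by simp [hB', h] at hB0)
    have hC'0 : 0 < C' := Nat.pos_of_ne_zero (fun h => by simp [hC', h] at hC0)
    have hpy' : A' ^ 2 + B' ^ 2 = C' ^ 2 := by
      have h2 : g ^ 2 * (A' ^ 2 + B' ^ 2) = g ^ 2 * (C' ^ 2) := by
        calc g ^ 2 * (A' ^ 2 + B' ^ 2) = (g * A') ^ 2 + (g * B') ^ 2 := by ring
          _ = (g * C') ^ 2 := by rw [← hA', ← hB', ← hC']; exact hpy
          _ = g ^ 2 * (C' ^ 2) := by ring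
      exact Nat.eq_of_mul_eq_mul_left (by positivity) h2
    have hcopAB : Nat.Coprime A' B' := by
      have h2 : g * 1 = g * Nat.gcd A' B' := by
        rw [mul_one, ← Nat.gcd_mul_left, ← hA', ← hB', ← hg]
      exact (Nat.eq_of_mul_eq_mul_left hg0 h2).symm
    have hsqAC : Nat.Coprime (A' ^ 2) (C' ^ 2) := by
      rw [← hpy', add_comm]
      exact Nat.coprime_add_self_right.mpr (Nat.Coprime.pow 2 2 hcopAB)
    have hsqBC : Nat.Coprime (B' ^ 2) (C' ^ 2) := by
      rw [← hpy']
      exact Nat.coprime_add_self_right.mpr (Nat.Coprime.pow 2 2 hcopAB.symm)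
    have hcopAC : Nat.Coprime A' C' :=
      (Nat.coprime_pow_left_iff two_pos _ _).mp ((Nat.coprime_pow_right_iff two_pos _ _).mp hsqAC)
    have hcopBC : Nat.Coprime B' C' :=
      (Nat.coprime_pow_left_iff two_pos _ _).mp ((Nat.coprime_pow_right_iff two_pos _ _).mp hsqBC)
    -- parity
    have heven : 2 ∣ A' * B' := by
      rcases Nat.even_or_odd A' with hA2 | hA2
      · exact dvd_mul_of_dvd_left hA2.two_dvd _
      · rcases Nat.even_or_odd B' with hB2 | hB2
        · exact dvd_mul_of_dvd_right hB2.two_dvd _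
        · exfalso
          have ha4 := odd_sq_mod_four A' (Nat.odd_iff.mp hA2)
          have hb4 := odd_sq_mod_four B' (Nat.odd_iff.mp hB2)
          have hc4 := sq_mod_four C'
          omega
    obtain ⟨u, hu⟩ := heven
    have hu0 : 0 < u := by
      have : 0 < A' * B' := Nat.mul_pos hA'0 hB'0
      omega
    have hug : u * g ^ 2 = t * d ^ 2 := by
      have h1 : 2 * (u * g ^ 2) = 2 * (t * d ^ 2) := by
        calc 2 * (u * g ^ 2) = (2 * u) * g ^ 2 := by ring
          _ = (A' * B') * g ^ 2 := by rw [hu]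
          _ = (g * A') * (g * B') := by ring
          _ = 2 * (t * d ^ 2) := by rw [← hA', ← hB']; exact harea'
      omega
    have hgtd : g ∣ t * d := by
      rw [← Nat.pow_dvd_pow_iff (two_ne_zero)]
      exact ⟨t * u, by rw [mul_pow]; calc t ^ 2 * d ^ 2 = t * (t * d ^ 2) := by ring
        _ = t * (u * g ^ 2) := by rw [hug]
        _ = g ^ 2 * (t * u) := by ring⟩
    obtain ⟨k, hk⟩ := hgtd
    have hut : u * t = k ^ 2 := by
      have h1 : (u * t) * g ^ 2 = k ^ 2 * g ^ 2 := by
        calc (u * t) * g ^ 2 = t * (u * g ^ 2) := by ring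
          _ = t * (t * d ^ 2) := by rw [hug]
          _ = (t * d) ^ 2 := by ring
          _ = (g * k) ^ 2 := by rw [← hk]
          _ = k ^ 2 * g ^ 2 := by ring
      exact Nat.eq_of_mul_eq_mul_right (by positivity) h1
    obtain ⟨m, hm⟩ := key t u k ht htsf hut
    have hm0 : 0 < m := Nat.pos_of_ne_zero (fun h => by simp [h] at hm; omega)
    exact ⟨A', B', C', m, hA'0, hB'0, hC'0, hm0, hcopAB, hcopAC, hcopBC, hpy',
      by rw [hu, hm]⟩
  · rintro ⟨a, b, c, n, ha, hb, hc, hn, _, _, _, hpy, harea⟩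
    refine ⟨a / n, b / n, c / n, by positivity, by positivity, by positivity, ?_, ?_⟩
    · have hn' : (n:ℚ) ≠ 0 := by positivity
      field_simp
      exact_mod_cast congrArg (fun x : ℕ => (x : ℚ)) hpy
    · have hn' : (n:ℚ) ≠ 0 := by positivity
      field_simp
      have h3 : a * b = n ^ 2 * 2 * t := by rw [harea]; ring
      exact_mod_cast h3
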